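/- Let μ > 0 be real, and let a, s, t be integers with s ≥ a + 2 and t ≥ s. Then h_μ(t, s) = H_μ(t, s-1)/H_μ(t, a) is strictly increasing in t: h_μ(t+1, s) > h_μ(t, s). Equivalently, the nabla difference ∇h_μ(t,s) = h_μ(t,s) - h_μ(t-1,s) equals μ(s-a-1)·Γ(t-s+μ)Γ(t-a-1)/(Γ(t-s+1)Γ(t-a+μ)) > 0. -/
import Mathlib


noncomputable def H (μ : ℝ) (t a : ℤ) : ℝ :=
  Real.Gamma ((t : ℝ) - a + μ) / (Real.Gamma ((t : ℝ) - a) * Real.Gamma (μ + 1))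

lemma aux_alg (x b c μ GM GA GB GC GD : ℝ) (hx : 0 < x) (hc : 0 < c)
    (hbc : b = x + c) (hμ : 0 < μ) (hGM : 0 < GM) (hGA : 0 < GA)
    (hGB : 0 < GB) (hGC : 0 < GC) (hGD : 0 < GD) :
    GA / (GB * GM) / (GD / (GC * GM)) <
      (x + μ) * GA / (x * GB * GM) / ((b + μ) * GD / (b * GC * GM)) ∧
    (x + μ) * GA / (x * GB * GM) / ((b + μ) * GD / (b * GC * GM)) -
        GA / (GB * GM) / (GD / (GC * GM))
      = μ * c * (GA * GC) / (x * GB * ((b + μ) * GD)) := by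
  have hb : 0 < b := by linarith
  have hbμ : 0 < b + μ := by linarith
  have heq : (x + μ) * GA / (x * GB * GM) / ((b + μ) * GD / (b * GC * GM)) -
        GA / (GB * GM) / (GD / (GC * GM))
      = μ * c * (GA * GC) / (x * GB * ((b + μ) * GD)) := by
    subst hbc
    field_simp
    ring
  have hpos : 0 < μ * c * (GA * GC) / (x * GB * ((b + μ) * GD)) := by positivity
  exact ⟨by linarith, heq⟩

theorem h_ratio_increasing (μ : ℝ) (hμ : 0 < μ) (a s t : ℤ)
    (hs : a + 2 ≤ s) (ht : s ≤ t) :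
    H μ t (s - 1) / H μ t a < H μ (t + 1) (s - 1) / H μ (t + 1) a ∧
    H μ (t + 1) (s - 1) / H μ (t + 1) a - H μ t (s - 1) / H μ t a =
      μ * ((s : ℝ) - a - 1) *
        (Real.Gamma ((t : ℝ) + 1 - s + μ) * Real.Gamma ((t : ℝ) + 1 - a - 1)) /
        (Real.Gamma ((t : ℝ) + 1 - s + 1) * Real.Gamma ((t : ℝ) + 1 - a + μ)) := by
  have hst : (s : ℝ) ≤ t := by exact_mod_cast ht
  have has : (a : ℝ) + 2 ≤ s := by exact_mod_cast hs
  have h1 : (0:ℝ) < (t:ℝ) - s + 1 := by linarith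
  have h2 : (0:ℝ) < (t:ℝ) - s + 1 + μ := by linarith
  have h3 : (0:ℝ) < (t:ℝ) - a := by linarith
  have h4 : (0:ℝ) < (t:ℝ) - a + μ := by linarith
  have hΓμ : 0 < Real.Gamma (μ + 1) := Real.Gamma_pos_of_pos (by linarith)
  have hGB := Real.Gamma_pos_of_pos h1
  have hGA := Real.Gamma_pos_of_pos h2
  have hGC := Real.Gamma_pos_of_pos h3
  have hGD := Real.Gamma_pos_of_pos h4
  have r1 : Real.Gamma ((t:ℝ) - s + 1 + μ + 1)
      = ((t:ℝ) - s + 1 + μ) * Real.Gamma ((t:ℝ) - s + 1 + μ) := Real.Gamma_add_one h2.ne'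
  have r2 : Real.Gamma ((t:ℝ) - s + 1 + 1)
      = ((t:ℝ) - s + 1) * Real.Gamma ((t:ℝ) - s + 1) := Real.Gamma_add_one h1.ne'
  have r3 : Real.Gamma ((t:ℝ) - a + 1)
      = ((t:ℝ) - a) * Real.Gamma ((t:ℝ) - a) := Real.Gamma_add_one h3.ne'
  have r4 : Real.Gamma ((t:ℝ) - a + μ + 1)
      = ((t:ℝ) - a + μ) * Real.Gamma ((t:ℝ) - a + μ) := Real.Gamma_add_one h4.ne'
  unfold H
  push_cast
  rw [show (t:ℝ) + 1 - ((s:ℝ) - 1) + μ = (t:ℝ) - s + 1 + μ + 1 by ring,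
      show (t:ℝ) + 1 - ((s:ℝ) - 1) = (t:ℝ) - s + 1 + 1 by ring,
      show (t:ℝ) + 1 - (s:ℝ) + μ = (t:ℝ) - s + 1 + μ by ring,
      show (t:ℝ) + 1 - (a:ℝ) - 1 = (t:ℝ) - a by ring,
      show (t:ℝ) + 1 - (s:ℝ) + 1 = (t:ℝ) - s + 1 + 1 by ring,
      show (t:ℝ) + 1 - (a:ℝ) + μ = (t:ℝ) - a + μ + 1 by ring,
      show (t:ℝ) + 1 - (a:ℝ) = (t:ℝ) - a + 1 by ring,
      show (t:ℝ) - ((s:ℝ) - 1) + μ = (t:ℝ) - s + 1 + μ by ring,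
      show (t:ℝ) - ((s:ℝ) - 1) = (t:ℝ) - s + 1 by ring,
      r1, r2, r3, r4]
  exact aux_alg ((t:ℝ) - s + 1) ((t:ℝ) - a) ((s:ℝ) - a - 1) μ
    (Real.Gamma (μ + 1)) _ _ _ _ h1 (by linarith) (by ring) hμ hΓμ hGA hGB hGC hGD
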